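/- Suppose the three discrete equations of the SIEQ scheme hold: (i) τ⋆·(3φ^{n+1}−4φ^n+φ^{n−1})/(2δt) + (S₁/ε²)(φ^{n+1}−2φ^n+φ^{n−1}) − S₂Δ(φ^{n+1}−2φ^n+φ^{n−1}) = −Z⋆U^{n+1} − (λ/ε)p⋆u^{n+1}; (ii) 3U^{n+1}−4U^n+U^{n−1} = (1/2)Z⋆(3φ^{n+1}−4φ^n+φ^{n−1}); (iii) (3u^{n+1}−4u^n+u^{n−1})/(2δt) − DΔu^{n+1} = Kp⋆(3φ^{n+1}−4φ^n+φ^{n−1})/(2δt), with periodic boundary conditions. Then E^{n+1}_bdf2 − E^n_bdf2 ≤ −δt‖√τ⋆ (3φ^{n+1}−4φ^n+φ^{n−1})/(2δt)‖² − δt(λD/(εK))‖∇u^{n+1}‖² ≤ 0, where E^{n+1}_bdf2 = (‖U^{n+1}‖²+‖2U^{n+1}−U^n‖²)/2 + (λ/(2εK))(‖u^{n+1}‖²+‖2u^{n+1}−u^n‖²)/2 + (S₁/(2ε²))‖φ^{n+1}−φ^n‖² + (S₂/2)‖∇(φ^{n+1}−φ^n)‖². -/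

import Mathlib

open MeasureTheory
open scoped RealInnerProductSpace

lemma sieq_int_mul {Ω : Type*} [MeasurableSpace Ω] {μ : Measure Ω} {f g : Ω → ℝ}
    (hf : MemLp f 2 μ) (hg : MemLp g 2 μ) : Integrable (fun x => f x * g x) μ := by
  have h : Integrable (fun x => ((f x + g x)^2 - (f x)^2 - (g x)^2)/2) μ :=
    (((hf.add hg).integrable_sq.sub hf.integrable_sq).sub hg.integrable_sq).div_const 2
  refine h.congr ?_
  filter_upwards with x
  ring

lemma sieq_int_normsq {Ω E : Type*} [MeasurableSpace Ω] {μ : Measure Ω}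
    [NormedAddCommGroup E] {f : Ω → E}
    (hf : MemLp f 2 μ) : Integrable (fun x => ‖f x‖^2) μ :=
  hf.norm.integrable_sq

lemma sieq_inner_bdf2 {d : ℕ} (p q r : EuclideanSpace ℝ (Fin d)) :
    ⟪p - 2 • q + r, 3 • p - 4 • q + r⟫
      = ‖p - q‖^2 - ‖q - r‖^2 + 2*‖p - 2 • q + r‖^2 := by
  simp only [← Nat.cast_smul_eq_nsmul ℝ, Nat.cast_ofNat]
  simp only [inner_add_left, inner_add_right, inner_sub_left, inner_sub_right,
    inner_smul_left, inner_smul_right, real_inner_self_eq_norm_sq,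
    norm_sub_sq_real, norm_add_sq_real, norm_smul, RingHom.id_apply, conj_trivial,
    Real.norm_ofNat]
  rw [real_inner_comm q p, real_inner_comm r p, real_inner_comm r q]
  ring


/-- Theorem 3.2: unconditional energy stability of the SIEQ scheme. `φ2, φ1, φ0`
stand for `φ^{n+1}, φⁿ, φ^{n-1}` (similarly for `u`, `U`), `gφi`/`gu2` are their
gradients, `Lstab = Δ(φ^{n+1} - 2φⁿ + φ^{n-1})` and `Lu2 = Δu^{n+1}` with the
periodic integration-by-parts identities as hypotheses.  If the three discrete
equations (3.12)-(3.14) hold pointwise, then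
`E^{n+1}_bdf2 - E^n_bdf2 ≤ -δt‖√τ⋆(3φ^{n+1}-4φⁿ+φ^{n-1})/(2δt)‖²
 - δt(λD/(εK))‖∇u^{n+1}‖² ≤ 0`. -/
theorem sieq_unconditional_energy_stability
    {Ω : Type*} [MeasurableSpace Ω] (μ : Measure Ω) [IsFiniteMeasure μ] (d : ℕ)
    (δt S₁ S₂ ε lam D K : ℝ)
    (hδt : 0 < δt) (hS₁ : 0 < S₁) (hS₂ : 0 < S₂) (hε : 0 < ε)
    (hlam : 0 < lam) (hD : 0 < D) (hK : 0 < K)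
    (τs Zs ps : Ω → ℝ) (hτ : ∀ x, 0 ≤ τs x)
    (Mτ MZ Mp : ℝ) (hτb : ∀ x, τs x ≤ Mτ) (hZb : ∀ x, |Zs x| ≤ MZ)
    (hpb : ∀ x, |ps x| ≤ Mp)
    (φ2 φ1 φ0 u2 u1 u0 U2 U1 U0 Lstab Lu2 : Ω → ℝ)
    (gφ2 gφ1 gφ0 gu2 : Ω → EuclideanSpace ℝ (Fin d))
    -- square-integrability of all quantities:
    (hφ2 : MemLp φ2 2 μ) (hφ1 : MemLp φ1 2 μ) (hφ0 : MemLp φ0 2 μ)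
    (hu2 : MemLp u2 2 μ) (hu1 : MemLp u1 2 μ) (hu0 : MemLp u0 2 μ)
    (hU2 : MemLp U2 2 μ) (hU1 : MemLp U1 2 μ) (hU0 : MemLp U0 2 μ)
    (hgφ2 : MemLp gφ2 2 μ) (hgφ1 : MemLp gφ1 2 μ) (hgφ0 : MemLp gφ0 2 μ)
    (hgu2 : MemLp gu2 2 μ)
    (hLs : MemLp Lstab 2 μ) (hLu : MemLp Lu2 2 μ)
    -- the discrete SIEQ scheme (3.12)-(3.14), pointwise:
    (heq1 : ∀ x, τs x * ((3*φ2 x - 4*φ1 x + φ0 x)/(2*δt))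
        + (S₁/ε^2) * (φ2 x - 2*φ1 x + φ0 x) - S₂ * Lstab x
        = -(Zs x) * U2 x - (lam/ε) * ps x * u2 x)
    (heq2 : ∀ x, 3*U2 x - 4*U1 x + U0 x
        = (1/2) * Zs x * (3*φ2 x - 4*φ1 x + φ0 x))
    (heq3 : ∀ x, (3*u2 x - 4*u1 x + u0 x)/(2*δt) - D * Lu2 x
        = K * ps x * ((3*φ2 x - 4*φ1 x + φ0 x)/(2*δt)))
    -- periodic integration by parts for the two Laplacian terms:
    (hIBP1 : (∫ x, Lstab x * (3*φ2 x - 4*φ1 x + φ0 x) ∂μ)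
        = -∫ x, ⟪gφ2 x - 2 • gφ1 x + gφ0 x, 3 • gφ2 x - 4 • gφ1 x + gφ0 x⟫ ∂μ)
    (hIBP2 : (∫ x, Lu2 x * u2 x ∂μ) = -∫ x, ‖gu2 x‖^2 ∂μ) :
    ((((∫ x, (U2 x)^2 ∂μ) + ∫ x, (2*U2 x - U1 x)^2 ∂μ)/2
       + (lam/(2*ε*K)) * (((∫ x, (u2 x)^2 ∂μ) + ∫ x, (2*u2 x - u1 x)^2 ∂μ)/2)
       + (S₁/(2*ε^2)) * (∫ x, (φ2 x - φ1 x)^2 ∂μ)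
       + (S₂/2) * (∫ x, ‖gφ2 x - gφ1 x‖^2 ∂μ))
     - (((∫ x, (U1 x)^2 ∂μ) + ∫ x, (2*U1 x - U0 x)^2 ∂μ)/2
       + (lam/(2*ε*K)) * (((∫ x, (u1 x)^2 ∂μ) + ∫ x, (2*u1 x - u0 x)^2 ∂μ)/2)
       + (S₁/(2*ε^2)) * (∫ x, (φ1 x - φ0 x)^2 ∂μ)
       + (S₂/2) * (∫ x, ‖gφ1 x - gφ0 x‖^2 ∂μ))
     ≤ -δt * (∫ x, τs x * ((3*φ2 x - 4*φ1 x + φ0 x)/(2*δt))^2 ∂μ)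
        - δt * (lam*D/(ε*K)) * ∫ x, ‖gu2 x‖^2 ∂μ) ∧
    (-δt * (∫ x, τs x * ((3*φ2 x - 4*φ1 x + φ0 x)/(2*δt))^2 ∂μ)
        - δt * (lam*D/(ε*K)) * ∫ x, ‖gu2 x‖^2 ∂μ ≤ 0) := by
  have hδ : δt ≠ 0 := hδt.ne'
  have hε' : ε ≠ 0 := hε.ne'
  have hK' : K ≠ 0 := hK.ne'
  -- MemLp of the various linear combinations
  have hχ : MemLp (fun x => 3*φ2 x - 4*φ1 x + φ0 x) 2 μ :=
    ((hφ2.const_mul 3).sub (hφ1.const_mul 4)).add hφ0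
  have hψ : MemLp (fun x => φ2 x - 2*φ1 x + φ0 x) 2 μ :=
    (hφ2.sub (hφ1.const_mul 2)).add hφ0
  have hBU : MemLp (fun x => 3*U2 x - 4*U1 x + U0 x) 2 μ :=
    ((hU2.const_mul 3).sub (hU1.const_mul 4)).add hU0
  have hAu : MemLp (fun x => 3*u2 x - 4*u1 x + u0 x) 2 μ :=
    ((hu2.const_mul 3).sub (hu1.const_mul 4)).add hu0
  -- integrability of all products/squares we use
  have if1 : Integrable (fun x => (φ2 x - 2*φ1 x + φ0 x) * (3*φ2 x - 4*φ1 x + φ0 x)) μ :=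
    sieq_int_mul hψ hχ
  have if2 : Integrable (fun x => Lstab x * (3*φ2 x - 4*φ1 x + φ0 x)) μ :=
    sieq_int_mul hLs hχ
  have if3 : Integrable (fun x => U2 x * (3*U2 x - 4*U1 x + U0 x)) μ :=
    sieq_int_mul hU2 hBU
  have if4 : Integrable (fun x => u2 x * (3*u2 x - 4*u1 x + u0 x)) μ :=
    sieq_int_mul hu2 hAu
  have if5 : Integrable (fun x => Lu2 x * u2 x) μ := sieq_int_mul hLu hu2
  have iφ1 : Integrable (fun x => (φ2 x - φ1 x)^2) μ := (hφ2.sub hφ1).integrable_sq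
  have iφ0 : Integrable (fun x => (φ1 x - φ0 x)^2) μ := (hφ1.sub hφ0).integrable_sq
  have iψ : Integrable (fun x => (φ2 x - 2*φ1 x + φ0 x)^2) μ := hψ.integrable_sq
  have iU2 : Integrable (fun x => (U2 x)^2) μ := hU2.integrable_sq
  have iU21 : Integrable (fun x => (2*U2 x - U1 x)^2) μ :=
    ((hU2.const_mul 2).sub hU1).integrable_sq
  have iU1 : Integrable (fun x => (U1 x)^2) μ := hU1.integrable_sq
  have iU10 : Integrable (fun x => (2*U1 x - U0 x)^2) μ :=
    ((hU1.const_mul 2).sub hU0).integrable_sq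
  have iUψ : Integrable (fun x => (U2 x - 2*U1 x + U0 x)^2) μ :=
    ((hU2.sub (hU1.const_mul 2)).add hU0).integrable_sq
  have iu2 : Integrable (fun x => (u2 x)^2) μ := hu2.integrable_sq
  have iu21 : Integrable (fun x => (2*u2 x - u1 x)^2) μ :=
    ((hu2.const_mul 2).sub hu1).integrable_sq
  have iu1 : Integrable (fun x => (u1 x)^2) μ := hu1.integrable_sq
  have iu10 : Integrable (fun x => (2*u1 x - u0 x)^2) μ :=
    ((hu1.const_mul 2).sub hu0).integrable_sq
  have iuψ : Integrable (fun x => (u2 x - 2*u1 x + u0 x)^2) μ :=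
    ((hu2.sub (hu1.const_mul 2)).add hu0).integrable_sq
  have ig1 : Integrable (fun x => ‖gφ2 x - gφ1 x‖^2) μ := sieq_int_normsq (hgφ2.sub hgφ1)
  have ig0 : Integrable (fun x => ‖gφ1 x - gφ0 x‖^2) μ := sieq_int_normsq (hgφ1.sub hgφ0)
  have hgψfun : (fun x => gφ2 x - 2 • gφ1 x + gφ0 x)
      = fun x => gφ2 x - (2:ℝ) • gφ1 x + gφ0 x := by
    funext x; simp only [← Nat.cast_smul_eq_nsmul ℝ, Nat.cast_ofNat]
  have hgψm : MemLp (fun x => gφ2 x - 2 • gφ1 x + gφ0 x) 2 μ := by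
    rw [hgψfun]; exact (hgφ2.sub (hgφ1.const_smul (2:ℝ))).add hgφ0
  have igψ : Integrable (fun x => ‖gφ2 x - 2 • gφ1 x + gφ0 x‖^2) μ := sieq_int_normsq hgψm
  -- the master pointwise identity
  have hpt : ∀ x, δt * (τs x * ((3*φ2 x - 4*φ1 x + φ0 x)/(2*δt))^2)
      = (-(S₁/(2*ε^2))) * ((φ2 x - 2*φ1 x + φ0 x) * (3*φ2 x - 4*φ1 x + φ0 x))
        + ((S₂/2) * (Lstab x * (3*φ2 x - 4*φ1 x + φ0 x))
        + ((-1:ℝ) * (U2 x * (3*U2 x - 4*U1 x + U0 x))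
        + ((-(lam/(2*ε*K))) * (u2 x * (3*u2 x - 4*u1 x + u0 x))
        + (δt*lam*D/(ε*K)) * (Lu2 x * u2 x)))) := by
    intro x
    have h1 := heq1 x
    have h2 := heq2 x
    have h3 := heq3 x
    have hr : δt * ((3*φ2 x - 4*φ1 x + φ0 x)/(2*δt)) = (3*φ2 x - 4*φ1 x + φ0 x)/2 := by
      field_simp
    have hZc : Zs x * (3*φ2 x - 4*φ1 x + φ0 x) = 2*(3*U2 x - 4*U1 x + U0 x) := by linarith
    have hpc : ps x * (3*φ2 x - 4*φ1 x + φ0 x)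
        = (3*u2 x - 4*u1 x + u0 x)/K - 2*δt*D*Lu2 x/K := by
      field_simp at h3 ⊢; linarith
    linear_combination (δt*((3*φ2 x - 4*φ1 x + φ0 x)/(2*δt))) * h1
      + (-(Zs x*U2 x) - (lam/ε)*ps x*u2 x - (S₁/ε^2)*(φ2 x - 2*φ1 x + φ0 x) + S₂*Lstab x) * hr
      + (-(U2 x/2)) * hZc + (-(lam*u2 x/(2*ε))) * hpc
  -- Step A : integrate the master identity and split
  have hA : δt * (∫ x, τs x * ((3*φ2 x - 4*φ1 x + φ0 x)/(2*δt))^2 ∂μ)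
      = (-(S₁/(2*ε^2))) * (∫ x, (φ2 x - 2*φ1 x + φ0 x) * (3*φ2 x - 4*φ1 x + φ0 x) ∂μ)
        + ((S₂/2) * (∫ x, Lstab x * (3*φ2 x - 4*φ1 x + φ0 x) ∂μ)
        + ((-1:ℝ) * (∫ x, U2 x * (3*U2 x - 4*U1 x + U0 x) ∂μ)
        + ((-(lam/(2*ε*K))) * (∫ x, u2 x * (3*u2 x - 4*u1 x + u0 x) ∂μ)
        + (δt*lam*D/(ε*K)) * (∫ x, Lu2 x * u2 x ∂μ)))) := by
    have t5 : Integrable (fun x => (δt*lam*D/(ε*K)) * (Lu2 x * u2 x)) μ := if5.const_mul _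
    have t4 : Integrable (fun x => (-(lam/(2*ε*K))) * (u2 x * (3*u2 x - 4*u1 x + u0 x))
        + (δt*lam*D/(ε*K)) * (Lu2 x * u2 x)) μ := (if4.const_mul _).add t5
    have t3 : Integrable (fun x => (-1:ℝ) * (U2 x * (3*U2 x - 4*U1 x + U0 x))
        + ((-(lam/(2*ε*K))) * (u2 x * (3*u2 x - 4*u1 x + u0 x))
        + (δt*lam*D/(ε*K)) * (Lu2 x * u2 x))) μ := (if3.const_mul _).add t4
    have t2 : Integrable (fun x => (S₂/2) * (Lstab x * (3*φ2 x - 4*φ1 x + φ0 x))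
        + ((-1:ℝ) * (U2 x * (3*U2 x - 4*U1 x + U0 x))
        + ((-(lam/(2*ε*K))) * (u2 x * (3*u2 x - 4*u1 x + u0 x))
        + (δt*lam*D/(ε*K)) * (Lu2 x * u2 x)))) μ := (if2.const_mul _).add t3
    rw [← integral_const_mul δt, integral_congr_ae (ae_of_all μ hpt),
      integral_add (if1.const_mul _) t2,
      integral_add (if2.const_mul _) t3,
      integral_add (if3.const_mul _) t4,
      integral_add (if4.const_mul _) t5,
      integral_const_mul, integral_const_mul, integral_const_mul, integral_const_mul,
      integral_const_mul]
  -- Step B : the S₁ product in terms of squares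
  have hB : (∫ x, (φ2 x - 2*φ1 x + φ0 x) * (3*φ2 x - 4*φ1 x + φ0 x) ∂μ)
      = ((∫ x, (φ2 x - φ1 x)^2 ∂μ) - (∫ x, (φ1 x - φ0 x)^2 ∂μ))
        + 2 * (∫ x, (φ2 x - 2*φ1 x + φ0 x)^2 ∂μ) := by
    have hptB : ∀ x, (φ2 x - 2*φ1 x + φ0 x) * (3*φ2 x - 4*φ1 x + φ0 x)
        = ((φ2 x - φ1 x)^2 - (φ1 x - φ0 x)^2) + 2 * (φ2 x - 2*φ1 x + φ0 x)^2 :=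
      fun x => by ring
    have tB : Integrable (fun x => (φ2 x - φ1 x)^2 - (φ1 x - φ0 x)^2) μ := iφ1.sub iφ0
    rw [integral_congr_ae (ae_of_all μ hptB),
      integral_add tB (iψ.const_mul 2), integral_sub iφ1 iφ0, integral_const_mul]
  -- Step C : IBP + gradient BDF2 identity
  have hC : (∫ x, Lstab x * (3*φ2 x - 4*φ1 x + φ0 x) ∂μ)
      = -(((∫ x, ‖gφ2 x - gφ1 x‖^2 ∂μ) - (∫ x, ‖gφ1 x - gφ0 x‖^2 ∂μ))
          + 2 * (∫ x, ‖gφ2 x - 2 • gφ1 x + gφ0 x‖^2 ∂μ)) := by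
    rw [hIBP1]
    congr 1
    have hptC : ∀ x, ⟪gφ2 x - 2 • gφ1 x + gφ0 x, 3 • gφ2 x - 4 • gφ1 x + gφ0 x⟫
        = (‖gφ2 x - gφ1 x‖^2 - ‖gφ1 x - gφ0 x‖^2) + 2 * ‖gφ2 x - 2 • gφ1 x + gφ0 x‖^2 := by
      intro x
      have := sieq_inner_bdf2 (gφ2 x) (gφ1 x) (gφ0 x)
      linarith
    have tC : Integrable (fun x => ‖gφ2 x - gφ1 x‖^2 - ‖gφ1 x - gφ0 x‖^2) μ := ig1.sub ig0
    rw [integral_congr_ae (ae_of_all μ hptC),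
      integral_add tC (igψ.const_mul 2), integral_sub ig1 ig0, integral_const_mul]
  -- Step D : BDF2 identity for U
  have hD : (∫ x, U2 x * (3*U2 x - 4*U1 x + U0 x) ∂μ)
      = (1/2) * (∫ x, (U2 x)^2 ∂μ) + ((1/2) * (∫ x, (2*U2 x - U1 x)^2 ∂μ)
        + ((-(1:ℝ)/2) * (∫ x, (U1 x)^2 ∂μ) + ((-(1:ℝ)/2) * (∫ x, (2*U1 x - U0 x)^2 ∂μ)
        + (1/2) * (∫ x, (U2 x - 2*U1 x + U0 x)^2 ∂μ)))) := by
    have hptD : ∀ x, U2 x * (3*U2 x - 4*U1 x + U0 x)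
        = (1/2) * (U2 x)^2 + ((1/2) * (2*U2 x - U1 x)^2
          + ((-(1:ℝ)/2) * (U1 x)^2 + ((-(1:ℝ)/2) * (2*U1 x - U0 x)^2
          + (1/2) * (U2 x - 2*U1 x + U0 x)^2))) := fun x => by ring
    have s5 : Integrable (fun x => (1/2 : ℝ) * (U2 x - 2*U1 x + U0 x)^2) μ := iUψ.const_mul _
    have s4 : Integrable (fun x => (-(1:ℝ)/2) * (2*U1 x - U0 x)^2
        + (1/2 : ℝ) * (U2 x - 2*U1 x + U0 x)^2) μ := (iU10.const_mul _).add s5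
    have s3 : Integrable (fun x => (-(1:ℝ)/2) * (U1 x)^2 + ((-(1:ℝ)/2) * (2*U1 x - U0 x)^2
        + (1/2 : ℝ) * (U2 x - 2*U1 x + U0 x)^2)) μ := (iU1.const_mul _).add s4
    have s2 : Integrable (fun x => (1/2 : ℝ) * (2*U2 x - U1 x)^2 + ((-(1:ℝ)/2) * (U1 x)^2
        + ((-(1:ℝ)/2) * (2*U1 x - U0 x)^2
        + (1/2 : ℝ) * (U2 x - 2*U1 x + U0 x)^2))) μ := (iU21.const_mul _).add s3
    rw [integral_congr_ae (ae_of_all μ hptD),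
      integral_add (iU2.const_mul _) s2,
      integral_add (iU21.const_mul _) s3,
      integral_add (iU1.const_mul _) s4,
      integral_add (iU10.const_mul _) s5,
      integral_const_mul, integral_const_mul, integral_const_mul, integral_const_mul,
      integral_const_mul]
  -- Step E : BDF2 identity for u
  have hE : (∫ x, u2 x * (3*u2 x - 4*u1 x + u0 x) ∂μ)
      = (1/2) * (∫ x, (u2 x)^2 ∂μ) + ((1/2) * (∫ x, (2*u2 x - u1 x)^2 ∂μ)
        + ((-(1:ℝ)/2) * (∫ x, (u1 x)^2 ∂μ) + ((-(1:ℝ)/2) * (∫ x, (2*u1 x - u0 x)^2 ∂μ)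
        + (1/2) * (∫ x, (u2 x - 2*u1 x + u0 x)^2 ∂μ)))) := by
    have hptE : ∀ x, u2 x * (3*u2 x - 4*u1 x + u0 x)
        = (1/2) * (u2 x)^2 + ((1/2) * (2*u2 x - u1 x)^2
          + ((-(1:ℝ)/2) * (u1 x)^2 + ((-(1:ℝ)/2) * (2*u1 x - u0 x)^2
          + (1/2) * (u2 x - 2*u1 x + u0 x)^2))) := fun x => by ring
    have r5 : Integrable (fun x => (1/2 : ℝ) * (u2 x - 2*u1 x + u0 x)^2) μ := iuψ.const_mul _
    have r4 : Integrable (fun x => (-(1:ℝ)/2) * (2*u1 x - u0 x)^2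
        + (1/2 : ℝ) * (u2 x - 2*u1 x + u0 x)^2) μ := (iu10.const_mul _).add r5
    have r3 : Integrable (fun x => (-(1:ℝ)/2) * (u1 x)^2 + ((-(1:ℝ)/2) * (2*u1 x - u0 x)^2
        + (1/2 : ℝ) * (u2 x - 2*u1 x + u0 x)^2)) μ := (iu1.const_mul _).add r4
    have r2 : Integrable (fun x => (1/2 : ℝ) * (2*u2 x - u1 x)^2 + ((-(1:ℝ)/2) * (u1 x)^2
        + ((-(1:ℝ)/2) * (2*u1 x - u0 x)^2
        + (1/2 : ℝ) * (u2 x - 2*u1 x + u0 x)^2))) μ := (iu21.const_mul _).add r3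
    rw [integral_congr_ae (ae_of_all μ hptE),
      integral_add (iu2.const_mul _) r2,
      integral_add (iu21.const_mul _) r3,
      integral_add (iu1.const_mul _) r4,
      integral_add (iu10.const_mul _) r5,
      integral_const_mul, integral_const_mul, integral_const_mul, integral_const_mul,
      integral_const_mul]
  -- nonnegativity facts
  have nT : 0 ≤ ∫ x, τs x * ((3*φ2 x - 4*φ1 x + φ0 x)/(2*δt))^2 ∂μ :=
    integral_nonneg fun x => mul_nonneg (hτ x) (sq_nonneg _)
  have nG : 0 ≤ ∫ x, ‖gu2 x‖^2 ∂μ := integral_nonneg fun x => sq_nonneg _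
  have nψ : 0 ≤ ∫ x, (φ2 x - 2*φ1 x + φ0 x)^2 ∂μ := integral_nonneg fun x => sq_nonneg _
  have ngψ : 0 ≤ ∫ x, ‖gφ2 x - 2 • gφ1 x + gφ0 x‖^2 ∂μ := integral_nonneg fun x => sq_nonneg _
  have nUψ : 0 ≤ ∫ x, (U2 x - 2*U1 x + U0 x)^2 ∂μ := integral_nonneg fun x => sq_nonneg _
  have nuψ : 0 ≤ ∫ x, (u2 x - 2*u1 x + u0 x)^2 ∂μ := integral_nonneg fun x => sq_nonneg _
  constructor
  · -- the key exact energy identity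
    have key : ((((∫ x, (U2 x)^2 ∂μ) + ∫ x, (2*U2 x - U1 x)^2 ∂μ)/2
       + (lam/(2*ε*K)) * (((∫ x, (u2 x)^2 ∂μ) + ∫ x, (2*u2 x - u1 x)^2 ∂μ)/2)
       + (S₁/(2*ε^2)) * (∫ x, (φ2 x - φ1 x)^2 ∂μ)
       + (S₂/2) * (∫ x, ‖gφ2 x - gφ1 x‖^2 ∂μ))
     - (((∫ x, (U1 x)^2 ∂μ) + ∫ x, (2*U1 x - U0 x)^2 ∂μ)/2
       + (lam/(2*ε*K)) * (((∫ x, (u1 x)^2 ∂μ) + ∫ x, (2*u1 x - u0 x)^2 ∂μ)/2)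
       + (S₁/(2*ε^2)) * (∫ x, (φ1 x - φ0 x)^2 ∂μ)
       + (S₂/2) * (∫ x, ‖gφ1 x - gφ0 x‖^2 ∂μ)))
        = -δt * (∫ x, τs x * ((3*φ2 x - 4*φ1 x + φ0 x)/(2*δt))^2 ∂μ)
          - δt * (lam*D/(ε*K)) * (∫ x, ‖gu2 x‖^2 ∂μ)
          - ((S₁/ε^2) * (∫ x, (φ2 x - 2*φ1 x + φ0 x)^2 ∂μ)
            + S₂ * (∫ x, ‖gφ2 x - 2 • gφ1 x + gφ0 x‖^2 ∂μ)
            + (1/2) * (∫ x, (U2 x - 2*U1 x + U0 x)^2 ∂μ)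
            + (lam/(4*ε*K)) * (∫ x, (u2 x - 2*u1 x + u0 x)^2 ∂μ)) := by
      linear_combination hA + (-(S₁/(2*ε^2))) * hB + (S₂/2) * hC + (-1 : ℝ) * hD
        + (-(lam/(2*ε*K))) * hE + (δt*lam*D/(ε*K)) * hIBP2
    have m1 : 0 ≤ (S₁/ε^2) * (∫ x, (φ2 x - 2*φ1 x + φ0 x)^2 ∂μ) :=
      mul_nonneg (by positivity) nψ
    have m2 : 0 ≤ S₂ * (∫ x, ‖gφ2 x - 2 • gφ1 x + gφ0 x‖^2 ∂μ) := mul_nonneg hS₂.le ngψ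
    have m3 : 0 ≤ (1/2 : ℝ) * (∫ x, (U2 x - 2*U1 x + U0 x)^2 ∂μ) := by linarith
    have m4 : 0 ≤ (lam/(4*ε*K)) * (∫ x, (u2 x - 2*u1 x + u0 x)^2 ∂μ) :=
      mul_nonneg (by positivity) nuψ
    linarith [key, m1, m2, m3, m4]
  · have m5 : 0 ≤ δt * (∫ x, τs x * ((3*φ2 x - 4*φ1 x + φ0 x)/(2*δt))^2 ∂μ) :=
      mul_nonneg hδt.le nT
    have m6 : 0 ≤ δt * (lam*D/(ε*K)) * (∫ x, ‖gu2 x‖^2 ∂μ) :=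
      mul_nonneg (mul_nonneg hδt.le (by positivity)) nG
    linarith
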